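/- Let M be an irreducible real Z-matrix. Then there exists a vector r with all entries strictly positive such that M·rᵗ = 0ᵗ if and only if there exists a vector s with all entries strictly positive such that Mᵗ·sᵗ = 0ᵗ. -/
import Mathlib

open Finset Matrix

/-- `M` is irreducible: for every nonempty proper subset `S` of indices there is a
nonzero entry from `S` to its complement. -/
def MatIrreducible {n : ℕ} (M : Matrix (Fin n) (Fin n) ℝ) : Prop :=
  ∀ S : Finset (Fin n), S.Nonempty → S ≠ Finset.univ → ∃ i ∈ S, ∃ j ∉ S, M i j ≠ 0

lemma key_dir {n : ℕ} (hn : 0 < n) (M : Matrix (Fin n) (Fin n) ℝ)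
    (hZ : ∀ i j, i ≠ j → M i j ≤ 0) (hirr : MatIrreducible M)
    (r : Fin n → ℝ) (hr : ∀ i, 0 < r i) (hMr : M.mulVec r = 0) :
    ∃ s : Fin n → ℝ, (∀ i, 0 < s i) ∧ M.transpose.mulVec s = 0 := by
  set B : Matrix (Fin n) (Fin n) ℝ := Matrix.of fun i j => M i j * r j with hB
  have hBrow : ∀ i, ∑ j, B i j = 0 := by
    intro i
    have := congrFun hMr i
    simpa [Matrix.mulVec, dotProduct, hB] using this
  have hBoff : ∀ i j, i ≠ j → B i j ≤ 0 := fun i j h =>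
    mul_nonpos_of_nonpos_of_nonneg (hZ i j h) (hr j).le
  have hBdiag : ∀ i, 0 ≤ B i i := by
    intro i
    have h1 : B i i + ∑ j ∈ univ.erase i, B i j = 0 := by
      rw [Finset.add_sum_erase _ _ (mem_univ i)]; exact hBrow i
    have h2 : ∑ j ∈ univ.erase i, B i j ≤ 0 :=
      Finset.sum_nonpos fun j hj => hBoff i j (Finset.mem_erase.mp hj).1.symm
    linarith
  -- B is singular
  have hone : B.mulVec (fun _ => 1) = 0 := by
    funext i
    simpa [Matrix.mulVec, dotProduct] using hBrow i
  have hdetB : B.det = 0 := by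
    rw [← Matrix.exists_mulVec_eq_zero_iff]
    exact ⟨fun _ => 1, fun h => one_ne_zero (congrFun h ⟨0, hn⟩), hone⟩
  have hdetBT : B.transpose.det = 0 := by rw [Matrix.det_transpose]; exact hdetB
  obtain ⟨s, hs0, hsB⟩ := (Matrix.exists_mulVec_eq_zero_iff).mpr hdetBT
  have hcol : ∀ j, ∑ i, B i j * s i = 0 := by
    intro j
    have := congrFun hsB j
    simpa [Matrix.mulVec, dotProduct, Matrix.transpose_apply] using this
  -- columns applied to |s| are nonpositive
  have hle : ∀ j, ∑ i, B i j * |s i| ≤ 0 := by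
    intro j
    have e1 : B j j * s j + ∑ i ∈ univ.erase j, B i j * s i = 0 := by
      rw [Finset.add_sum_erase _ (fun i => B i j * s i) (mem_univ j)]; exact hcol j
    have e2 : B j j * |s j| ≤ ∑ i ∈ univ.erase j, (-(B i j)) * |s i| := by
      have h3 : B j j * |s j| = |B j j * s j| := by
        rw [abs_mul, abs_of_nonneg (hBdiag j)]
      have h4 : B j j * s j = -∑ i ∈ univ.erase j, B i j * s i := by linarith
      rw [h3, h4, abs_neg]
      calc |∑ i ∈ univ.erase j, B i j * s i|
          ≤ ∑ i ∈ univ.erase j, |B i j * s i| := Finset.abs_sum_le_sum_abs _ _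
        _ = ∑ i ∈ univ.erase j, (-(B i j)) * |s i| := by
            refine Finset.sum_congr rfl fun i hi => ?_
            rw [abs_mul, abs_of_nonpos (hBoff i j (Finset.mem_erase.mp hi).1)]
    have e3 : ∑ i ∈ univ.erase j, (-(B i j)) * |s i|
        = -∑ i ∈ univ.erase j, B i j * |s i| := by
      rw [← Finset.sum_neg_distrib]
      exact Finset.sum_congr rfl fun i _ => by ring
    have e4 : B j j * |s j| + ∑ i ∈ univ.erase j, B i j * |s i| ≤ 0 := by
      rw [e3] at e2; linarith
    calc ∑ i, B i j * |s i|
        = B j j * |s j| + ∑ i ∈ univ.erase j, B i j * |s i| :=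
          (Finset.add_sum_erase _ (fun i => B i j * |s i|) (mem_univ j)).symm
      _ ≤ 0 := e4
  have hsum : ∑ j, ∑ i, B i j * |s i| = 0 := by
    rw [Finset.sum_comm]
    refine Finset.sum_eq_zero fun i _ => ?_
    rw [← Finset.sum_mul, hBrow i, zero_mul]
  have heq : ∀ j, ∑ i, B i j * |s i| = 0 := by
    intro j
    exact (Finset.sum_eq_zero_iff_of_nonpos (fun j _ => hle j)).mp hsum j (mem_univ j)
  -- strict positivity of |s|
  have hpos : ∀ i, 0 < |s i| := by
    by_contra hcon
    push_neg at hcon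
    obtain ⟨j, hj⟩ := hcon
    have hsj : s j = 0 := abs_eq_zero.mp (le_antisymm hj (abs_nonneg _))
    set S : Finset (Fin n) := univ.filter (fun i => s i ≠ 0) with hS
    have hSne : S.Nonempty := by
      obtain ⟨i, hi⟩ := Function.ne_iff.mp hs0
      exact ⟨i, by simp only [hS, Finset.mem_filter, Finset.mem_univ, true_and]; simpa using hi⟩
    have hjS : j ∉ S := by simp [hS, hsj]
    have hSuniv : S ≠ univ := fun h => hjS (h ▸ mem_univ j)
    obtain ⟨i, hiS, j', hj'S, hMij'⟩ := hirr S hSne hSuniv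
    have hsi : s i ≠ 0 := (Finset.mem_filter.mp hiS).2
    have hsj' : s j' = 0 := by
      by_contra h
      exact hj'S (Finset.mem_filter.mpr ⟨mem_univ _, h⟩)
    have hij' : i ≠ j' := fun h => hj'S (h ▸ hiS)
    have hBij' : B i j' ≠ 0 := mul_ne_zero hMij' (hr j').ne'
    have hterms : ∀ i' ∈ (univ : Finset (Fin n)), B i' j' * |s i'| ≤ 0 := by
      intro i' _
      rcases eq_or_ne i' j' with rfl | h
      · rw [hsj', abs_zero, mul_zero]
      · exact mul_nonpos_of_nonpos_of_nonneg (hBoff i' j' h) (abs_nonneg _)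
    have hzero := (Finset.sum_eq_zero_iff_of_nonpos hterms).mp (heq j') i (mem_univ i)
    exact (mul_ne_zero hBij' (abs_ne_zero.mpr hsi)) hzero
  refine ⟨fun i => |s i|, hpos, ?_⟩
  funext j
  have h2 : (∑ i, M i j * |s i|) * r j = ∑ i, B i j * |s i| := by
    rw [Finset.sum_mul]
    exact Finset.sum_congr rfl fun i _ => by simp [hB]; ring
  have h3 : (∑ i, M i j * |s i|) * r j = 0 := h2.trans (heq j)
  have h4 : ∑ i, M i j * |s i| = 0 := by
    rcases mul_eq_zero.mp h3 with h | h
    · exact h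
    · exact absurd h (hr j).ne'
  simpa [Matrix.mulVec, dotProduct, Matrix.transpose_apply] using h4

/-- an irreducible Z-matrix has a strictly positive kernel vector iff
its transpose does. -/
theorem stmt_5 (n : ℕ) (M : Matrix (Fin n) (Fin n) ℝ)
    (hZ : ∀ i j, i ≠ j → M i j ≤ 0) (hirr : MatIrreducible M) :
    (∃ r : Fin n → ℝ, (∀ i, 0 < r i) ∧ M.mulVec r = 0) ↔
    (∃ s : Fin n → ℝ, (∀ i, 0 < s i) ∧ M.transpose.mulVec s = 0) := by
  rcases Nat.eq_zero_or_pos n with rfl | hn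
  · constructor <;> intro _ <;>
      exact ⟨fun i => 1, fun i => i.elim0, by funext i; exact i.elim0⟩
  constructor
  · rintro ⟨r, hr, hMr⟩
    exact key_dir hn M hZ hirr r hr hMr
  · rintro ⟨s, hs, hMs⟩
    have hZ' : ∀ i j, i ≠ j → M.transpose i j ≤ 0 := fun i j h => hZ j i h.symm
    have hirr' : MatIrreducible M.transpose := by
      intro S hS hSne
      have h1 : Sᶜ.Nonempty := by
        obtain ⟨x, hx⟩ := Finset.not_subset.mp (fun h => hSne (Finset.eq_univ_iff_forall.mpr fun y => h (Finset.mem_univ y)))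
        exact ⟨x, Finset.mem_compl.mpr hx.2⟩
      have h2 : Sᶜ ≠ univ := by
        intro h
        obtain ⟨x, hx⟩ := hS
        have := h ▸ (Finset.mem_univ x)
        exact (Finset.mem_compl.mp this) hx
      obtain ⟨i, hi, j, hj, hij⟩ := hirr Sᶜ h1 h2
      exact ⟨j, by simpa using hj, i, by simpa using hi, hij⟩
    obtain ⟨t, ht, hMt⟩ := key_dir hn M.transpose hZ' hirr' s hs hMs
    rw [Matrix.transpose_transpose] at hMt
    exact ⟨t, ht, hMt⟩
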